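/- arXiv:0909.1346 — 2 statements merged into one kernel-verified Lean document; each statement's English description precedes it below -/
import Mathlib

section
/- Let c ≥ 1 and let N_1,…,N_c be positive integers, and let ⪯ be a recursive Gray-code order on ∏_{i=1}^c {1,…,N_i}. Then in the ⪯-sorted list of all ∏_{i=1}^c N_i tuples, the number of runs in column j equals 1 + (N_j − 1)·∏_{i=1}^{j−1} N_i for every j ∈ {1,…,c}. -/
section Aux

variable {β : Type*} [DecidableEq β]

/-- number of adjacent changes in a list -/
def chgs (l : List β) : ℕ := (l.zip l.tail).countP (fun p => decide (p.1 ≠ p.2))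

/-- equal values occur contiguously -/
def Grouped (l : List β) : Prop :=
  ∀ i j k (hi : i < l.length) (hj : j < l.length) (hk : k < l.length),
    i ≤ j → j ≤ k → l.get ⟨i, hi⟩ = l.get ⟨k, hk⟩ → l.get ⟨j, hj⟩ = l.get ⟨i, hi⟩

lemma Grouped.tail {a : β} {l : List β} (h : Grouped (a :: l)) : Grouped l := by
  intro i j k hi hj hk hij hjk heq
  have := h (i+1) (j+1) (k+1) (by simpa using hi) (by simpa using hj) (by simpa using hk)
    (by omega) (by omega) (by simpa using heq)
  simpa using this

lemma chgs_add_one (l : List β) (hg : Grouped l) (hne : l ≠ []) :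
    chgs l + 1 = l.toFinset.card := by
  induction l with
  | nil => exact absurd rfl hne
  | cons a t ih =>
    cases t with
    | nil => simp [chgs]
    | cons b t' =>
      have hg' : Grouped (b :: t') := hg.tail
      have hzip : (a :: b :: t').zip (b :: t') = (a, b) :: ((b :: t').zip t') := rfl
      have hch : chgs (a :: b :: t') = chgs (b :: t') + (if a ≠ b then 1 else 0) := by
        simp only [chgs, List.tail_cons, hzip, List.countP_cons]
        simp
      by_cases hab : a = b
      · subst hab
        have hts : (a :: a :: t').toFinset = (a :: t').toFinset := by simp
        rw [hts, hch]
        have h0 : (if a ≠ a then 1 else 0) = 0 := by simp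
        rw [h0]
        simpa using ih hg' (by simp)
      · have hanotin : a ∉ (b :: t') := by
          intro hmem
          rw [List.mem_cons] at hmem
          rcases hmem with hmem | hmem
          · exact hab hmem
          · obtain ⟨n, hn⟩ := List.get_of_mem hmem
            have hlt : (n : ℕ) + 2 < (a :: b :: t').length := by
              have := n.isLt; simp only [List.length_cons]; omega
            have := hg 0 1 ((n : ℕ) + 2) (by simp) (by simp) hlt
              (by omega) (by omega) (by simp [List.get]; exact hn.symm)
            simp [List.get] at this
            exact hab this.symm
        have hcard : (a :: b :: t').toFinset.card = (b :: t').toFinset.card + 1 := by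
          simp only [List.toFinset_cons (a := a)]
          rw [Finset.card_insert_of_notMem (by simpa using hanotin)]
        rw [hch, hcard, if_pos hab]
        have := ih hg' (by simp)
        omega

lemma chain'_zip {α : Type*} {R : α → α → Prop} :
    ∀ {l : List α}, l.Chain' R → ∀ p ∈ l.zip l.tail, R p.1 p.2
  | [], _, p, hp => by simp at hp
  | [a], _, p, hp => by simp at hp
  | a :: b :: t, h, p, hp => by
    replace h := List.isChain_cons_cons.mp h
    have hzip : (a :: b :: t).zip (b :: t) = (a, b) :: ((b :: t).zip t) := rfl
    rw [List.tail_cons, hzip, List.mem_cons] at hp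
    rcases hp with hp | hp
    · subst hp; exact h.1
    · exact chain'_zip h.2 p hp

lemma countP_split {α : Type*} (P Q R : α → Prop) [DecidablePred P] [DecidablePred Q]
    [DecidablePred R] :
    ∀ (l : List α), (∀ x ∈ l, (Q x ↔ P x ∨ R x) ∧ ¬(P x ∧ R x)) →
      l.countP (fun x => decide (Q x)) =
        l.countP (fun x => decide (P x)) + l.countP (fun x => decide (R x))
  | [], _ => by simp
  | a :: t, h => by
    have ha := h a (by simp)
    have ht := countP_split P Q R t (fun x hx => h x (List.mem_cons_of_mem a hx))
    simp only [List.countP_cons, ht]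
    by_cases hP : P a <;> by_cases hR : R a
    · exact absurd ⟨hP, hR⟩ ha.2
    · simp [hP, hR, ha.1.mpr (Or.inl hP)]; omega
    · simp [hP, hR, ha.1.mpr (Or.inr hR)]; omega
    · have : ¬ Q a := fun hq => by rcases ha.1.mp hq with h|h; exacts [hP h, hR h]
      simp [hP, hR, this]

end Aux

section Pre

variable {c : ℕ} {N : Fin c → ℕ}

/-- truncated sizes -/
def Ntr (N : Fin c → ℕ) (m : ℕ) : Fin c → ℕ := fun k => if (k : ℕ) < m then N k else 1

/-- prefix projection keeping first `m` coordinates, zeroing the rest -/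
def gpre (hN : ∀ i, 1 ≤ N i) (m : ℕ) (x : ∀ k : Fin c, Fin (N k)) : ∀ k : Fin c, Fin (N k) :=
  fun k => if (k : ℕ) < m then x k else ⟨0, hN k⟩

def trunc (N : Fin c → ℕ) (m : ℕ) (x : ∀ k : Fin c, Fin (N k)) : ∀ k : Fin c, Fin (Ntr N m k) :=
  fun k => if h : (k : ℕ) < m then ⟨(x k : ℕ), by simpa [Ntr, h] using (x k).2⟩
    else ⟨0, by simp [Ntr, h]⟩

def sec (hN : ∀ i, 1 ≤ N i) (m : ℕ) (y : ∀ k : Fin c, Fin (Ntr N m k)) : ∀ k : Fin c, Fin (N k) :=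
  fun k => if h : (k : ℕ) < m then ⟨(y k : ℕ), by have := (y k).2; simpa [Ntr, h] using this⟩
    else ⟨0, hN k⟩

lemma gpre_eq_sec_trunc (hN : ∀ i, 1 ≤ N i) (m : ℕ) :
    gpre hN m = sec hN m ∘ trunc N m := by
  funext x k
  by_cases h : (k : ℕ) < m <;> simp [gpre, sec, trunc, h]

lemma sec_injective (hN : ∀ i, 1 ≤ N i) (m : ℕ) : Function.Injective (sec hN m) := by
  intro y y' h
  funext k
  have hk := congrFun h k
  by_cases hm : (k : ℕ) < m
  · simp only [sec, dif_pos hm] at hk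
    have hv : ((y k : ℕ)) = ((y' k : ℕ)) := by simpa using hk
    exact Fin.ext hv

  · have h1 : Ntr N m k = 1 := by simp [Ntr, hm]
    have := (y k).2
    have := (y' k).2
    apply Fin.ext
    omega

lemma trunc_surjective (hN : ∀ i, 1 ≤ N i) (m : ℕ) : Function.Surjective (trunc N m) := by
  intro y
  refine ⟨sec hN m y, ?_⟩
  funext k
  by_cases h : (k : ℕ) < m
  · apply Fin.ext
    simp [trunc, sec, h]
  · have h1 : Ntr N m k = 1 := by simp [Ntr, h]
    have := (y k).2
    apply Fin.ext
    simp only [trunc, dif_neg h]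
    omega

lemma gpre_eq_iff (hN : ∀ i, 1 ≤ N i) (m : ℕ) (a b : ∀ k : Fin c, Fin (N k)) :
    gpre hN m a = gpre hN m b ↔ ∀ i : Fin c, (i : ℕ) < m → a i = b i := by
  constructor
  · intro h i hi
    have := congrFun h i
    simpa [gpre, hi] using this
  · intro h
    funext k
    by_cases hk : (k : ℕ) < m <;> simp [gpre, hk, h]

lemma card_image_gpre [DecidableEq (∀ k : Fin c, Fin (N k))] (hN : ∀ i, 1 ≤ N i) (m : ℕ) :
    (Finset.univ.image (gpre hN m)).card =
      ∏ k ∈ Finset.univ.filter (fun k : Fin c => (k : ℕ) < m), N k := by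
  classical
  rw [gpre_eq_sec_trunc]
  rw [show Finset.univ.image (sec hN m ∘ trunc N m)
      = (Finset.univ.image (trunc N m)).image (sec hN m) from (Finset.image_image).symm]
  rw [Finset.image_univ_of_surjective (trunc_surjective hN m)]
  rw [Finset.card_image_of_injective _ (sec_injective hN m)]
  rw [Finset.card_univ, Fintype.card_pi]
  rw [Finset.prod_filter]
  congr 1
  funext k
  by_cases h : (k : ℕ) < m <;> simp [Ntr, h]

end Pre

lemma toFinset_map_aux {α β : Type*} [DecidableEq α] [DecidableEq β] (f : α → β)
    (l : List α) : (l.map f).toFinset = l.toFinset.image f := by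
  ext x; simp




/-- The number of runs in column `i` of a list of rows: `1 +` the number of
adjacent pairs differing in component `i`, and `0` for the empty list. -/
def runsCol {c : ℕ} {N : Fin c → ℕ} (i : Fin c) :
    List (∀ k : Fin c, Fin (N k)) → ℕ
  | [] => 0
  | a :: l => 1 + ((a :: l).zip l).countP (fun ab => decide (ab.1 i ≠ ab.2 i))

/-- The RunCount of a list of rows: the sum over all columns of the number of runs. -/
def runCount {c : ℕ} {N : Fin c → ℕ} (l : List (∀ k : Fin c, Fin (N k))) : ℕ :=
  ∑ i : Fin c, runsCol i l

/-- A relation on the tuple space `∏ i, {0,…,N i − 1}` is a *recursive order* if for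
every `j` and all tuples `a ⪯ b ⪯ d` agreeing (`a` with `d`) on the first `j`
components, `b` also agrees with `a` on the first `j` components. -/
def IsRecursiveOrder {c : ℕ} (N : Fin c → ℕ)
    (le : (∀ k : Fin c, Fin (N k)) → (∀ k : Fin c, Fin (N k)) → Prop) : Prop :=
  ∀ (j : ℕ) (a b d : ∀ k : Fin c, Fin (N k)), le a b → le b d →
    (∀ i : Fin c, (i : ℕ) < j → a i = d i) → ∀ i : Fin c, (i : ℕ) < j → b i = a i

/-- For a recursive Gray-code order (a recursive linear order whose sorted
enumeration of all tuples has consecutive tuples differing in exactly one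
component), the number of runs in column `j` of the sorted enumeration of all
tuples equals `1 + (N_j − 1)·∏_{i < j} N_i`. -/
theorem recursive_gray_complete_table_runs {c : ℕ} (hc : 1 ≤ c) {N : Fin c → ℕ}
    (hN : ∀ i, 1 ≤ N i)
    (le : (∀ k : Fin c, Fin (N k)) → (∀ k : Fin c, Fin (N k)) → Prop)
    (hlin : IsLinearOrder _ le) (hrec : IsRecursiveOrder N le)
    (L : List (∀ k : Fin c, Fin (N k)))
    (hs : L.Pairwise le) (hnd : L.Nodup) (hall : ∀ x, x ∈ L)
    (hgray : L.Chain' (fun a b => ∃! i : Fin c, a i ≠ b i)) :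
    ∀ j : Fin c, runsCol j L = 1 + (N j - 1) * ∏ i ∈ Finset.Iio j, N i := by
  intro j
  have hLne : L ≠ [] := by
    intro h
    have := hall (fun k => ⟨0, hN k⟩)
    simp [h] at this
  -- sortedness gives `le` between any two positions
  have hrefl : ∀ x, le x x := hlin.toIsPartialOrder.toIsPreorder.refl
  have hpw := List.pairwise_iff_get.mp hs
  have hle : ∀ p q (hp : p < L.length) (hq : q < L.length), p ≤ q →
      le (L.get ⟨p, hp⟩) (L.get ⟨q, hq⟩) := by
    intro p q hp hq hpq
    rcases eq_or_lt_of_le hpq with rfl | hlt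
    · exact hrefl _
    · exact hpw ⟨p, hp⟩ ⟨q, hq⟩ hlt
  -- the list of prefixes at any level is grouped
  have hgrp : ∀ m, Grouped (L.map (gpre hN m)) := by
    intro m i j' k hi hj hk hij hjk heq
    have hiL : i < L.length := by simpa using hi
    have hjL : j' < L.length := by simpa using hj
    have hkL : k < L.length := by simpa using hk
    have heq' : gpre hN m (L.get ⟨i, hiL⟩) = gpre hN m (L.get ⟨k, hkL⟩) := by
      simpa using heq
    have had : ∀ i' : Fin c, (i' : ℕ) < m → L.get ⟨i, hiL⟩ i' = L.get ⟨k, hkL⟩ i' :=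
      (gpre_eq_iff hN m _ _).mp heq'
    have hb := hrec m (L.get ⟨i, hiL⟩) (L.get ⟨j', hjL⟩) (L.get ⟨k, hkL⟩)
      (hle i j' hiL hjL hij) (hle j' k hjL hkL hjk) had
    have := (gpre_eq_iff hN m _ _).mpr hb
    simpa using this
  have hLuniv : L.toFinset = Finset.univ :=
    Finset.eq_univ_iff_forall.mpr (fun x => List.mem_toFinset.mpr (hall x))
  -- count of prefix-changes at each level
  have hC : ∀ m, chgs (L.map (gpre hN m)) + 1 =
      ∏ k ∈ Finset.univ.filter (fun k : Fin c => (k : ℕ) < m), N k := by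
    intro m
    rw [chgs_add_one _ (hgrp m) (by simpa using hLne)]
    rw [toFinset_map_aux, hLuniv, card_image_gpre]
  have hmapcount : ∀ m, chgs (L.map (gpre hN m)) =
      (L.zip L.tail).countP (fun p => decide (gpre hN m p.1 ≠ gpre hN m p.2)) := by
    intro m
    unfold chgs
    rw [show (L.map (gpre hN m)).tail = L.tail.map (gpre hN m) from (List.map_tail).symm]
    rw [List.zip_map, List.countP_map]
    rfl
  -- the Gray condition splits the level-(j+1) changes
  have hkey : ∀ p ∈ L.zip L.tail,
      ((gpre hN ((j : ℕ) + 1) p.1 ≠ gpre hN ((j : ℕ) + 1) p.2) ↔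
        (p.1 j ≠ p.2 j) ∨ (gpre hN (j : ℕ) p.1 ≠ gpre hN (j : ℕ) p.2)) ∧
      ¬((p.1 j ≠ p.2 j) ∧ (gpre hN (j : ℕ) p.1 ≠ gpre hN (j : ℕ) p.2)) := by
    intro p hp
    obtain ⟨i0, hi0, huniq⟩ := chain'_zip hgray p hp
    have hne_iff : ∀ m, (gpre hN m p.1 ≠ gpre hN m p.2) ↔
        ∃ i : Fin c, (i : ℕ) < m ∧ p.1 i ≠ p.2 i := by
      intro m
      rw [Ne, gpre_eq_iff]
      push_neg
      simp only [ne_eq]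
    constructor
    · rw [hne_iff, hne_iff]
      constructor
      · rintro ⟨i, him, hne⟩
        rcases Nat.lt_succ_iff_lt_or_eq.mp him with h | h
        · exact Or.inr ⟨i, h, hne⟩
        · have hij : i = j := Fin.ext h
          subst hij
          exact Or.inl hne
      · rintro (h | ⟨i, him, hne⟩)
        · exact ⟨j, Nat.lt_succ_self _, h⟩
        · exact ⟨i, Nat.lt_succ_of_lt him, hne⟩
    · rintro ⟨hj, hg⟩
      rw [hne_iff] at hg
      obtain ⟨i, him, hne⟩ := hg
      have h1 : i = i0 := huniq i hne
      have h2 : j = i0 := huniq j hj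
      rw [h1, ← h2] at him
      exact absurd him (lt_irrefl _)
  have hsplit := countP_split (fun p : (∀ k : Fin c, Fin (N k)) × (∀ k : Fin c, Fin (N k)) => p.1 j ≠ p.2 j)
    (fun p => gpre hN ((j : ℕ) + 1) p.1 ≠ gpre hN ((j : ℕ) + 1) p.2)
    (fun p => gpre hN (j : ℕ) p.1 ≠ gpre hN (j : ℕ) p.2)
    (L.zip L.tail) hkey
  beta_reduce at hsplit
  -- product identities
  have hIio : Finset.univ.filter (fun k : Fin c => (k : ℕ) < (j : ℕ)) = Finset.Iio j := by
    ext i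
    simp only [Finset.mem_filter, Finset.mem_univ, true_and, Finset.mem_Iio]
    exact Iff.rfl
  have hins : Finset.univ.filter (fun k : Fin c => (k : ℕ) < (j : ℕ) + 1) =
      insert j (Finset.univ.filter (fun k : Fin c => (k : ℕ) < (j : ℕ))) := by
    ext i
    simp only [Finset.mem_filter, Finset.mem_insert, Finset.mem_univ, true_and]
    rw [Nat.lt_succ_iff_lt_or_eq]
    constructor
    · rintro (h | h)
      · exact Or.inr h
      · exact Or.inl (Fin.ext h)
    · rintro (rfl | h)
      · exact Or.inr rfl
      · exact Or.inl h
  have hP1 : (∏ k ∈ Finset.univ.filter (fun k : Fin c => (k : ℕ) < (j : ℕ) + 1), N k)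
      = N j * ∏ k ∈ Finset.univ.filter (fun k : Fin c => (k : ℕ) < (j : ℕ)), N k := by
    rw [hins, Finset.prod_insert (by
      simp only [Finset.mem_filter, Finset.mem_univ, true_and]
      omega)]
  -- put everything together
  obtain ⟨a, t, rfl⟩ : ∃ a t, L = a :: t := by
    cases L with
    | nil => exact absurd rfl hLne
    | cons a t => exact ⟨a, t, rfl⟩
  have hruns : runsCol j (a :: t) =
      1 + ((a :: t).zip ((a :: t).tail)).countP (fun ab => decide (ab.1 j ≠ ab.2 j)) := rfl
  rw [hruns]
  have e1 := hC ((j : ℕ) + 1)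
  have e0 := hC (j : ℕ)
  rw [hmapcount] at e1 e0
  rw [hsplit] at e1
  rw [hP1] at e1
  rw [hIio] at e1 e0
  have hfinal : ((a :: t).zip ((a :: t).tail)).countP (fun ab => decide (ab.1 j ≠ ab.2 j))
      = (N j - 1) * ∏ i ∈ Finset.Iio j, N i := by
    rw [Nat.sub_one_mul]
    omega
  omega
end

section
/- Let N ≥ 1 be an integer and p ∈ [0,1]. Let A and B be independent random subsets of {1,…,N}, where each element is included in A (respectively in B) independently with probability p. Then the probability that A and B are both nonempty and the maximum of A equals the minimum of B is exactly N·p²·(1−p)^{N−1}. Consequently, conditioned on both A and B being nonempty (for p ∈ (0,1]), this probability equals N p² (1−p)^{N−1} / (1−(1−p)^N)², which is the probability P↓↓_N(p) that two consecutive nonempty blocks under lexicographic sorting have a seamless join. -/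
open Finset

/-- `P↓↓_N(p) = N p² (1−p)^{N−1} / (1 − (1−p)^N)²`. -/
noncomputable def Pdd (N : ℕ) (p : ℝ) : ℝ :=
  (N : ℝ) * p ^ 2 * (1 - p) ^ (N - 1) / (1 - (1 - p) ^ N) ^ 2

private lemma sum_weight {α : Type*} [DecidableEq α] (s : Finset α) (p : ℝ) :
    ∑ t ∈ s.powerset, p ^ t.card * (1 - p) ^ (s.card - t.card) = 1 := by
  have h := Finset.prod_add (fun _ : α => p) (fun _ : α => 1 - p) s
  simp only [add_sub_cancel, prod_const, one_pow] at h
  calc ∑ t ∈ s.powerset, p ^ t.card * (1 - p) ^ (s.card - t.card)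
      = ∑ t ∈ s.powerset, p ^ t.card * (1 - p) ^ (s \ t).card :=
        Finset.sum_congr rfl fun t ht => by rw [card_sdiff_of_subset (mem_powerset.mp ht)]
    _ = 1 := h.symm

private lemma sum_max_eq {N : ℕ} (p : ℝ) (m : Fin N) :
    ∑ A ∈ (univ : Finset (Fin N)).powerset,
      p ^ A.card * (1 - p) ^ (N - A.card) *
        (if A.max = (m : WithBot (Fin N)) then (1 : ℝ) else 0)
      = p * (1 - p) ^ (N - 1 - (m : ℕ)) := by
  simp only [mul_ite, mul_one, mul_zero]
  rw [← Finset.sum_filter]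
  have key : (univ : Finset (Fin N)).powerset.filter (fun A => A.max = (m : WithBot (Fin N)))
      = (Finset.Iio m).powerset.image (insert m) := by
    ext A
    simp only [mem_filter, mem_powerset, mem_image, subset_univ, true_and]
    constructor
    · intro hA
      refine ⟨A.erase m, ?_, ?_⟩
      · intro x hx
        rw [mem_erase] at hx
        rw [mem_Iio]
        exact lt_of_le_of_ne (Finset.le_max_of_eq hx.2 hA) hx.1
      · rw [Finset.insert_erase (Finset.mem_of_max hA)]
    · rintro ⟨S, hS, rfl⟩
      refine le_antisymm (Finset.max_le_iff.mpr fun a ha => ?_)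
        (Finset.le_max (mem_insert_self m S))
      rcases mem_insert.mp ha with rfl | h
      · exact le_rfl
      · exact_mod_cast le_of_lt (mem_Iio.mp (hS h))
  rw [key, Finset.sum_image ?inj]
  case inj =>
    intro S hS T hT h
    rw [Finset.mem_coe, mem_powerset] at hS hT
    have hmS : m ∉ S := fun h' => lt_irrefl m (mem_Iio.mp (hS h'))
    have hmT : m ∉ T := fun h' => lt_irrefl m (mem_Iio.mp (hT h'))
    rw [← Finset.erase_insert hmS, ← Finset.erase_insert hmT, h]
  have hb : ∀ S ∈ (Finset.Iio m).powerset,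
      p ^ (insert m S).card * (1 - p) ^ (N - (insert m S).card)
        = (p * (1 - p) ^ (N - 1 - (m : ℕ))) * (p ^ S.card * (1 - p) ^ ((m : ℕ) - S.card)) := by
    intro S hS
    rw [mem_powerset] at hS
    have hmS : m ∉ S := fun h' => lt_irrefl m (mem_Iio.mp (hS h'))
    have hcard : S.card ≤ (m : ℕ) := by
      have := Finset.card_le_card hS
      rwa [Fin.card_Iio] at this
    have hm : (m : ℕ) < N := m.isLt
    rw [Finset.card_insert_of_notMem hmS]
    have he : N - (S.card + 1) = (N - 1 - (m : ℕ)) + ((m : ℕ) - S.card) := by omega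
    rw [he, pow_add, pow_succ]
    ring
  rw [Finset.sum_congr rfl hb, ← Finset.mul_sum]
  have := sum_weight (Finset.Iio m) p
  rw [Fin.card_Iio] at this
  rw [this, mul_one]

private lemma sum_min_eq {N : ℕ} (p : ℝ) (m : Fin N) :
    ∑ B ∈ (univ : Finset (Fin N)).powerset,
      p ^ B.card * (1 - p) ^ (N - B.card) *
        (if B.min = (m : WithTop (Fin N)) then (1 : ℝ) else 0)
      = p * (1 - p) ^ ((m : ℕ)) := by
  simp only [mul_ite, mul_one, mul_zero]
  rw [← Finset.sum_filter]
  have key : (univ : Finset (Fin N)).powerset.filter (fun B => B.min = (m : WithTop (Fin N)))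
      = (Finset.Ioi m).powerset.image (insert m) := by
    ext B
    simp only [mem_filter, mem_powerset, mem_image, subset_univ, true_and]
    constructor
    · intro hB
      refine ⟨B.erase m, ?_, ?_⟩
      · intro x hx
        rw [mem_erase] at hx
        rw [mem_Ioi]
        exact lt_of_le_of_ne (Finset.min_le_of_eq hx.2 hB) (Ne.symm hx.1)
      · rw [Finset.insert_erase (Finset.mem_of_min hB)]
    · rintro ⟨S, hS, rfl⟩
      refine le_antisymm (Finset.min_le (mem_insert_self m S))
        (Finset.le_min_iff.mpr fun a ha => ?_)
      rcases mem_insert.mp ha with rfl | h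
      · exact le_rfl
      · exact_mod_cast le_of_lt (mem_Ioi.mp (hS h))
  rw [key, Finset.sum_image ?inj]
  case inj =>
    intro S hS T hT h
    rw [Finset.mem_coe, mem_powerset] at hS hT
    have hmS : m ∉ S := fun h' => lt_irrefl m (mem_Ioi.mp (hS h'))
    have hmT : m ∉ T := fun h' => lt_irrefl m (mem_Ioi.mp (hT h'))
    rw [← Finset.erase_insert hmS, ← Finset.erase_insert hmT, h]
  have hb : ∀ S ∈ (Finset.Ioi m).powerset,
      p ^ (insert m S).card * (1 - p) ^ (N - (insert m S).card)
        = (p * (1 - p) ^ ((m : ℕ))) * (p ^ S.card * (1 - p) ^ ((N - 1 - (m : ℕ)) - S.card)) := by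
    intro S hS
    rw [mem_powerset] at hS
    have hmS : m ∉ S := fun h' => lt_irrefl m (mem_Ioi.mp (hS h'))
    have hcard : S.card ≤ N - 1 - (m : ℕ) := by
      have := Finset.card_le_card hS
      rwa [Fin.card_Ioi] at this
    have hm : (m : ℕ) < N := m.isLt
    rw [Finset.card_insert_of_notMem hmS]
    have he : N - (S.card + 1) = (m : ℕ) + ((N - 1 - (m : ℕ)) - S.card) := by omega
    rw [he, pow_add, pow_succ]
    ring
  rw [Finset.sum_congr rfl hb, ← Finset.mul_sum]
  have := sum_weight (Finset.Ioi m) p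
  rw [Fin.card_Ioi] at this
  rw [this, mul_one]

/-- For independent random subsets `A`, `B` of `{1,…,N}` with each element
included independently with probability `p`, the probability that `A` and `B`
are both nonempty and `max A = min B` is exactly `N·p²·(1−p)^{N−1}`;
consequently, conditioning on both blocks being nonempty gives the seamless-join
probability `P↓↓_N(p) = N p² (1−p)^{N−1} / (1−(1−p)^N)²` of lexicographic
sorting. -/
theorem seamless_join_probability (N : ℕ) (hN : 1 ≤ N) (p : ℝ)
    (hp0 : 0 ≤ p) (hp1 : p ≤ 1) :
    (∑ A ∈ (univ : Finset (Fin N)).powerset, ∑ B ∈ (univ : Finset (Fin N)).powerset,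
        p ^ A.card * (1 - p) ^ (N - A.card) * (p ^ B.card * (1 - p) ^ (N - B.card)) *
          (if ∃ m : Fin N, A.max = (m : WithBot (Fin N)) ∧ B.min = (m : WithTop (Fin N))
            then 1 else 0))
      = (N : ℝ) * p ^ 2 * (1 - p) ^ (N - 1) ∧
    (0 < p →
      ((N : ℝ) * p ^ 2 * (1 - p) ^ (N - 1)) / (1 - (1 - p) ^ N) ^ 2 = Pdd N p) := by
  constructor
  · have ind : ∀ A B : Finset (Fin N),
        (if ∃ m : Fin N, A.max = (m : WithBot (Fin N)) ∧ B.min = (m : WithTop (Fin N))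
          then (1:ℝ) else 0)
        = ∑ m : Fin N, (if A.max = (m : WithBot (Fin N)) then (1:ℝ) else 0) *
            (if B.min = (m : WithTop (Fin N)) then (1:ℝ) else 0) := by
      intro A B
      by_cases h : ∃ m : Fin N, A.max = (m : WithBot (Fin N)) ∧ B.min = (m : WithTop (Fin N))
      · obtain ⟨m, hA, hB⟩ := h
        rw [if_pos ⟨m, hA, hB⟩]
        rw [Finset.sum_eq_single m]
        · rw [if_pos hA, if_pos hB, mul_one]
        · intro m' _ hm'
          rw [hA]
          have : (m : WithBot (Fin N)) ≠ (m' : WithBot (Fin N)) := by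
            simpa using fun h => hm' h.symm
          rw [if_neg this, zero_mul]
        · intro h; exact absurd (mem_univ m) h
      · rw [if_neg h]
        refine (Finset.sum_eq_zero fun m _ => ?_).symm
        by_cases hA : A.max = (m : WithBot (Fin N))
        · have hB : B.min ≠ (m : WithTop (Fin N)) := fun hB => h ⟨m, hA, hB⟩
          rw [if_neg hB, mul_zero]
        · rw [if_neg hA, zero_mul]
    calc (∑ A ∈ (univ : Finset (Fin N)).powerset, ∑ B ∈ (univ : Finset (Fin N)).powerset,
        p ^ A.card * (1 - p) ^ (N - A.card) * (p ^ B.card * (1 - p) ^ (N - B.card)) *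
          (if ∃ m : Fin N, A.max = (m : WithBot (Fin N)) ∧ B.min = (m : WithTop (Fin N))
            then 1 else 0))
        = ∑ m : Fin N,
            (∑ A ∈ (univ : Finset (Fin N)).powerset,
              p ^ A.card * (1 - p) ^ (N - A.card) *
                (if A.max = (m : WithBot (Fin N)) then (1:ℝ) else 0)) *
            (∑ B ∈ (univ : Finset (Fin N)).powerset,
              p ^ B.card * (1 - p) ^ (N - B.card) *
                (if B.min = (m : WithTop (Fin N)) then (1:ℝ) else 0)) := by
          have e1 : (∑ A ∈ (univ : Finset (Fin N)).powerset, ∑ B ∈ (univ : Finset (Fin N)).powerset,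
              p ^ A.card * (1 - p) ^ (N - A.card) * (p ^ B.card * (1 - p) ^ (N - B.card)) *
                (if ∃ m : Fin N, A.max = (m : WithBot (Fin N)) ∧ B.min = (m : WithTop (Fin N))
                  then 1 else 0))
              = ∑ A ∈ (univ : Finset (Fin N)).powerset, ∑ B ∈ (univ : Finset (Fin N)).powerset,
                  ∑ m : Fin N,
                  (p ^ A.card * (1 - p) ^ (N - A.card) *
                    (if A.max = (m : WithBot (Fin N)) then (1:ℝ) else 0)) *
                  (p ^ B.card * (1 - p) ^ (N - B.card) *
                    (if B.min = (m : WithTop (Fin N)) then (1:ℝ) else 0)) := by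
            refine Finset.sum_congr rfl fun A _ => Finset.sum_congr rfl fun B _ => ?_
            rw [ind, Finset.mul_sum]
            exact Finset.sum_congr rfl fun m _ => by ring
          rw [e1]
          rw [Finset.sum_congr rfl fun A _ => Finset.sum_comm, Finset.sum_comm]
          exact Finset.sum_congr rfl fun m _ => (Finset.sum_mul_sum _ _ _ _).symm
      _ = ∑ m : Fin N, (p * (1 - p) ^ (N - 1 - (m : ℕ))) * (p * (1 - p) ^ ((m : ℕ))) := by
          refine Finset.sum_congr rfl fun m _ => ?_
          rw [sum_max_eq, sum_min_eq]
      _ = ∑ m : Fin N, p ^ 2 * (1 - p) ^ (N - 1) := by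
          refine Finset.sum_congr rfl fun m _ => ?_
          have hm : (m : ℕ) < N := m.isLt
          have h2 : (N - 1 - (m : ℕ)) + (m : ℕ) = N - 1 := by omega
          rw [show (p * (1 - p) ^ (N - 1 - (m : ℕ))) * (p * (1 - p) ^ ((m : ℕ)))
              = p ^ 2 * (1 - p) ^ ((N - 1 - (m : ℕ)) + (m : ℕ)) from by rw [pow_add]; ring, h2]
      _ = (N : ℝ) * p ^ 2 * (1 - p) ^ (N - 1) := by
          rw [Finset.sum_const, card_univ, Fintype.card_fin, nsmul_eq_mul]
          ring
  · intro _
    rfl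
end
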